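/- Let ξ be a real vector bundle of rank k+1 over a space X, let H*(P(E); ℤ/2) be the mod-2 cohomology of its projectivization, a free module over H*(X; ℤ/2) with basis 1, t, …, t^k where t satisfies ∑_{r=0}^{k+1} w_{k+1-r}(ξ) t^r = 0. If for ℓ ≥ 0 one writes t^{k+ℓ} = ∑_{j=0}^k s_{j,ℓ+k-j} t^j with s_{j,r} ∈ H^r(X; ℤ/2), then s_{k,r} = w̄_r(ξ), the degree-r component of the inverse of the total Stiefel-Whitney class. Equivalently, as a purely algebraic statement: in a commutative ℤ/2-algebra A (complete graded), let w = 1 + w_1 + … + w_{k+1} and consider the quotient ring A[t]/(t^{k+1} + w_1 t^k + … + w_{k+1}). Writing t^{k+ℓ} in the basis 1, t, …, t^k, the coefficient of t^k in t^{k+ℓ} equals the degree-ℓ component of w^{-1}. -/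

import Mathlib

lemma coeffSumCX {A : Type*} [Semiring A] (f : ℕ → A) (n m : ℕ) :
    (∑ i ∈ Finset.range n, Polynomial.C (f i) * Polynomial.X ^ i).coeff m
      = if m < n then f m else 0 := by
  rw [Polynomial.finset_sum_coeff]
  simp only [Polynomial.coeff_C_mul, Polynomial.coeff_X_pow, mul_ite, mul_one, mul_zero]
  rw [Finset.sum_ite_eq]
  simp [Finset.mem_range]

lemma convShift {A : Type*} [CommRing A] (w wbar : ℕ → A) (k ℓ n : ℕ)
    (hwtop : ∀ i, k + 1 < i → w i = 0) (h1 : 1 ≤ n) (h2 : n ≤ ℓ) :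
    (∑ a ∈ Finset.range (k + n + 1),
      (if a < ℓ then wbar (ℓ - 1 - a) else 0) *
        (if k + n - a < k + 2 then w (k + 1 - (k + n - a)) else 0))
      = ∑ i ∈ Finset.range (ℓ - n + 1), w i * wbar (ℓ - n - i) := by
  have e1 : (∑ a ∈ Finset.range (k + n + 1),
      (if a < ℓ then wbar (ℓ - 1 - a) else 0) *
        (if k + n - a < k + 2 then w (k + 1 - (k + n - a)) else 0))
      = ∑ a ∈ Finset.Ico (n - 1) (min (ℓ - 1) (k + n) + 1),
      (if a < ℓ then wbar (ℓ - 1 - a) else 0) *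
        (if k + n - a < k + 2 then w (k + 1 - (k + n - a)) else 0) := by
    apply (Finset.sum_subset ?_ ?_).symm
    · intro a ha
      simp only [Finset.mem_Ico, Finset.mem_range] at *
      omega
    · intro a ha hna
      have ha' := Finset.mem_range.mp ha
      have hna' : ¬(n - 1 ≤ a ∧ a < min (ℓ - 1) (k + n) + 1) := fun h =>
        hna (Finset.mem_Ico.mpr h)
      by_cases hq : a < ℓ
      · rw [if_neg (show ¬(k + n - a < k + 2) by omega), mul_zero]
      · rw [if_neg hq, zero_mul]
  rw [e1, Finset.sum_Ico_eq_sum_range,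
    show min (ℓ - 1) (k + n) + 1 - (n - 1) = min (ℓ - n) (k + 1) + 1 by omega]
  have e3 : (∑ i ∈ Finset.range (min (ℓ - n) (k + 1) + 1),
      (if n - 1 + i < ℓ then wbar (ℓ - 1 - (n - 1 + i)) else 0) *
        (if k + n - (n - 1 + i) < k + 2 then w (k + 1 - (k + n - (n - 1 + i))) else 0))
      = ∑ i ∈ Finset.range (min (ℓ - n) (k + 1) + 1), w i * wbar (ℓ - n - i) := by
    apply Finset.sum_congr rfl
    intro i hi
    have hi' := Finset.mem_range.mp hi
    rw [if_pos (by omega), if_pos (by omega), mul_comm]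
    congr 1
    · congr 1; omega
    · congr 1; omega
  rw [e3]
  apply Finset.sum_subset
  · intro i hi; simp only [Finset.mem_range] at *; omega
  · intro i hi hni
    have h1 := Finset.mem_range.mp hi
    have h2 : ¬ i < min (ℓ - n) (k + 1) + 1 := fun h => hni (Finset.mem_range.mpr h)
    rw [hwtop i (by omega), zero_mul]

lemma convZero {A : Type*} [CommRing A] (w wbar : ℕ → A) (k ℓ n : ℕ) (h : ℓ < n) :
    (∑ a ∈ Finset.range (k + n + 1),
      (if a < ℓ then wbar (ℓ - 1 - a) else 0) *
        (if k + n - a < k + 2 then w (k + 1 - (k + n - a)) else 0)) = 0 := by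
  apply Finset.sum_eq_zero
  intro a _
  by_cases hq : a < ℓ
  · rw [if_neg (show ¬(k + n - a < k + 2) by omega), mul_zero]
  · rw [if_neg hq, zero_mul]

lemma convZeroCase {A : Type*} [CommRing A] (w wbar : ℕ → A) (k ℓ : ℕ)
    (hwtop : ∀ i, k + 1 < i → w i = 0) (hℓ : 1 ≤ ℓ) :
    (∑ a ∈ Finset.range (k + 1),
      (if a < ℓ then wbar (ℓ - 1 - a) else 0) *
        (if k - a < k + 2 then w (k + 1 - (k - a)) else 0))
      = ∑ i ∈ Finset.range ℓ, w (i + 1) * wbar (ℓ - 1 - i) := by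
  have e1 : (∑ a ∈ Finset.range (k + 1),
      (if a < ℓ then wbar (ℓ - 1 - a) else 0) *
        (if k - a < k + 2 then w (k + 1 - (k - a)) else 0))
      = ∑ a ∈ Finset.range (min (ℓ - 1) k + 1),
      (if a < ℓ then wbar (ℓ - 1 - a) else 0) *
        (if k - a < k + 2 then w (k + 1 - (k - a)) else 0) := by
    apply (Finset.sum_subset ?_ ?_).symm
    · intro a ha; simp only [Finset.mem_range] at *; omega
    · intro a ha hna
      have ha' := Finset.mem_range.mp ha
      have hna' : ¬ a < min (ℓ - 1) k + 1 := fun h => hna (Finset.mem_range.mpr h)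
      rw [if_neg (by omega), zero_mul]
  rw [e1]
  have e2 : (∑ a ∈ Finset.range (min (ℓ - 1) k + 1),
      (if a < ℓ then wbar (ℓ - 1 - a) else 0) *
        (if k - a < k + 2 then w (k + 1 - (k - a)) else 0))
      = ∑ a ∈ Finset.range (min (ℓ - 1) k + 1), w (a + 1) * wbar (ℓ - 1 - a) := by
    apply Finset.sum_congr rfl
    intro a ha
    have ha' := Finset.mem_range.mp ha
    rw [if_pos (by omega), if_pos (by omega), mul_comm]
    congr 2
    omega
  rw [e2]
  apply Finset.sum_subset
  · intro i hi; simp only [Finset.mem_range] at *; omega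
  · intro i hi hni
    have h1 := Finset.mem_range.mp hi
    have h2 : ¬ i < min (ℓ - 1) k + 1 := fun h => hni (Finset.mem_range.mpr h)
    rw [hwtop (i + 1) (by omega), zero_mul]

theorem stmt11 (k : ℕ) (A : Type*) [CommRing A] [Algebra (ZMod 2) A]
    (w wbar : ℕ → A) (hw0 : w 0 = 1) (hwtop : ∀ i, k + 1 < i → w i = 0)
    (hconv : ∀ N : ℕ,
      (∑ i ∈ Finset.range (N + 1), w i * wbar (N - i)) = if N = 0 then 1 else 0)
    (ℓ : ℕ) (s : ℕ → A)
    (hs : (Polynomial.X ^ (k + ℓ)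
        - ∑ j ∈ Finset.range (k + 1), Polynomial.C (s j) * Polynomial.X ^ j :
        Polynomial A) ∈
      Ideal.span {∑ i ∈ Finset.range (k + 2),
        Polynomial.C (w i) * Polynomial.X ^ (k + 1 - i)}) :
    s k = wbar ℓ := by
  rcases subsingleton_or_nontrivial A with hA | hA
  · exact Subsingleton.elim _ _
  set p : Polynomial A :=
    ∑ i ∈ Finset.range (k + 2), Polynomial.C (w i) * Polynomial.X ^ (k + 1 - i) with hpdef
  set q : Polynomial A :=
    ∑ i ∈ Finset.range ℓ, Polynomial.C (wbar (ℓ - 1 - i)) * Polynomial.X ^ i with hqdef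
  -- ascending form of p
  have hp : p = ∑ i ∈ Finset.range (k + 2),
      Polynomial.C (w (k + 1 - i)) * Polynomial.X ^ i := by
    rw [hpdef, ← Finset.sum_range_reflect
      (fun j => Polynomial.C (w (k + 1 - j)) * Polynomial.X ^ j) (k + 2)]
    apply Finset.sum_congr rfl
    intro i hi
    have hi' := Finset.mem_range.mp hi
    rw [show k + 1 - (k + 2 - 1 - i) = i by omega, show k + 2 - 1 - i = k + 1 - i by omega]
  have hpc : ∀ m, p.coeff m = if m < k + 2 then w (k + 1 - m) else 0 := by
    intro m; rw [hp, coeffSumCX]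
  have hqc : ∀ m, q.coeff m = if m < ℓ then wbar (ℓ - 1 - m) else 0 := by
    intro m; rw [hqdef, coeffSumCX]
  have hpm : p.Monic := by
    apply Polynomial.monic_of_natDegree_le_of_coeff_eq_one (k + 1)
    · rw [Polynomial.natDegree_le_iff_coeff_eq_zero]
      intro N hN; rw [hpc, if_neg (by omega)]
    · rw [hpc, if_pos (by omega), Nat.sub_self, hw0]
  have hpd : p.natDegree = k + 1 := by
    refine le_antisymm ?_ (Polynomial.le_natDegree_of_ne_zero ?_)
    · rw [Polynomial.natDegree_le_iff_coeff_eq_zero]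
      intro N hN; rw [hpc, if_neg (by omega)]
    · rw [hpc, if_pos (by omega), Nat.sub_self, hw0]; exact one_ne_zero
  have hmul : ∀ n : ℕ, (q * p).coeff (k + n) =
      ∑ a ∈ Finset.range (k + n + 1),
        (if a < ℓ then wbar (ℓ - 1 - a) else 0) *
          (if k + n - a < k + 2 then w (k + 1 - (k + n - a)) else 0) := by
    intro n
    rw [Polynomial.coeff_mul, Finset.Nat.sum_antidiagonal_eq_sum_range_succ_mk]
    apply Finset.sum_congr rfl
    intro a _
    rw [hqc, hpc]
  obtain ⟨c, hc⟩ := Ideal.mem_span_singleton'.mp hs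
  set Ps : Polynomial A :=
    ∑ j ∈ Finset.range (k + 1), Polynomial.C (s j) * Polynomial.X ^ j with hPsdef
  have hD : q * p + Ps - Polynomial.X ^ (k + ℓ) = (q - c) * p := by
    linear_combination hc
  have hDhigh : ∀ N, k < N →
      (q * p + Ps - Polynomial.X ^ (k + ℓ)).coeff N = 0 := by
    intro N hN
    rw [Polynomial.coeff_sub, Polynomial.coeff_add]
    have hPs : Ps.coeff N = 0 := by
      rw [hPsdef, coeffSumCX, if_neg (by omega)]
    rw [hPs, Polynomial.coeff_X_pow]
    have hNk : N = k + (N - k) := by omega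
    by_cases hcase : N - k ≤ ℓ
    · rw [hNk, hmul (N - k), convShift w wbar k ℓ (N - k) hwtop (by omega) hcase, hconv]
      by_cases hNeq : N - k = ℓ
      · rw [if_pos (by omega), if_pos (by omega)]; ring
      · rw [if_neg (by omega), if_neg (by omega)]; ring
    · rw [hNk, hmul (N - k), convZero w wbar k ℓ (N - k) (by omega),
        if_neg (by omega)]
      ring
  have hD0 : q * p + Ps - Polynomial.X ^ (k + ℓ) = 0 := by
    by_contra hne
    have hqc0 : q - c ≠ 0 := by
      intro h
      rw [hD, h, zero_mul] at hne
      exact hne rfl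
    have hnd : ((q - c) * p).natDegree = (q - c).natDegree + p.natDegree := by
      apply Polynomial.natDegree_mul'
      rw [hpm.leadingCoeff, mul_one]
      exact Polynomial.leadingCoeff_ne_zero.mpr hqc0
    have hle : (q * p + Ps - Polynomial.X ^ (k + ℓ)).natDegree ≤ k :=
      Polynomial.natDegree_le_iff_coeff_eq_zero.mpr hDhigh
    rw [hD] at hle
    rw [hnd, hpd] at hle
    omega
  have hcoeffk := congrArg (fun f : Polynomial A => f.coeff k) hD0
  simp only [Polynomial.coeff_sub, Polynomial.coeff_add, Polynomial.coeff_zero] at hcoeffk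
  have hPsk : Ps.coeff k = s k := by rw [hPsdef, coeffSumCX, if_pos (by omega)]
  rw [hPsk] at hcoeffk
  by_cases hℓ : ℓ = 0
  · subst hℓ
    have hq0 : q = 0 := by rw [hqdef]; simp
    rw [hq0, zero_mul, Polynomial.coeff_zero, Polynomial.coeff_X_pow,
      if_pos (by omega)] at hcoeffk
    have hwbar0 : wbar 0 = 1 := by
      have := hconv 0
      simp [hw0] at this
      exact this
    rw [hwbar0]
    linear_combination hcoeffk
  · have hqpk : (q * p).coeff k =
        ∑ i ∈ Finset.range ℓ, w (i + 1) * wbar (ℓ - 1 - i) := by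
      have := hmul 0
      simp only [Nat.add_zero] at this
      rw [this, convZeroCase w wbar k ℓ hwtop (by omega)]
    have hsum : ∑ i ∈ Finset.range ℓ, w (i + 1) * wbar (ℓ - 1 - i) = - wbar ℓ := by
      have h := hconv ℓ
      rw [Finset.sum_range_succ' (fun i => w i * wbar (ℓ - i)) ℓ, if_neg hℓ] at h
      have he : ∑ i ∈ Finset.range ℓ, w (i + 1) * wbar (ℓ - (i + 1))
          = ∑ i ∈ Finset.range ℓ, w (i + 1) * wbar (ℓ - 1 - i) := by
        apply Finset.sum_congr rfl
        intro i _
        congr 2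
        omega
      rw [he, hw0, one_mul, Nat.sub_zero] at h
      linear_combination h
    rw [hqpk, hsum, Polynomial.coeff_X_pow, if_neg (by omega)] at hcoeffk
    linear_combination hcoeffk
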